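/- Let A be a set, let m, k, ℓ ≥ 1 be integers, and let t_0,…,t_{k+1} : A^{m+2} → A be operations satisfying the Jónsson-type condition (B). Let α, β, γ be congruences with respect to the operations t_0,…,t_{k+1}. Then α ∩ (β ∘_{mℓ+1} γ) ⊆ (α ∩ β) ∘_{kℓ+1} (α ∩ γ). -/

import Mathlib

/-- Relational composition: `a (Comp R S) c` iff there is `b` with `a R b` and `b S c`. -/
def Comp {A : Type*} (R S : A → A → Prop) : A → A → Prop :=
  fun a c => ∃ b, R a b ∧ S b c

/-- `AltComp R S m` is the alternating composition `R ∘ S ∘ R ∘ ⋯` with exactly `m` factors. -/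
def AltComp {A : Type*} : (R S : A → A → Prop) → ℕ → A → A → Prop
  | _, _, 0 => Eq
  | R, _, 1 => R
  | R, S, (n+2) => Comp R (AltComp S R (n+1))

/-- Converse relation. -/
def Conv {A : Type*} (R : A → A → Prop) : A → A → Prop := fun a b => R b a

/-- Intersection of relations. -/
def InterRel {A : Type*} (R S : A → A → Prop) : A → A → Prop := fun a b => R a b ∧ S a b

/-- `RelPow R n` is `R ∘ R ∘ ⋯ ∘ R` with `n` factors. -/
def RelPow {A : Type*} (R : A → A → Prop) : ℕ → A → A → Prop
  | 0 => Eq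
  | 1 => R
  | n+2 => Comp R (RelPow R (n+1))

/-- Compatibility of a relation with a ternary operation. -/
def Compat3 {A : Type*} (f : A → A → A → A) (R : A → A → Prop) : Prop :=
  ∀ a a' b b' c c', R a a' → R b b' → R c c' → R (f a b c) (f a' b' c')

/-- Compatibility of a relation with an `n`-ary operation. -/
def CompatV {A : Type*} {n : ℕ} (f : (Fin n → A) → A) (R : A → A → Prop) : Prop :=
  ∀ a b : Fin n → A, (∀ i, R (a i) (b i)) → R (f a) (f b)

/-- Composition `S 0 ∘ S 1 ∘ ⋯ ∘ S (n-1)` of a family of `n` relations. -/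
def FamComp {A : Type*} : (n : ℕ) → (Fin n → A → A → Prop) → A → A → Prop
  | 0, _ => Eq
  | 1, S => S 0
  | n+2, S => Comp (S 0) (FamComp (n+1) (fun i => S i.succ))

/-- The substitution `x_0, x_0, x_2, x_2, x_4, x_4, …` (arguments identified in
consecutive pairs starting from the first two). -/
def EvenPair {A : Type*} (m : ℕ) (x : Fin (m+2) → A) : Fin (m+2) → A :=
  fun j => x ⟨2 * (j.val / 2), by have := j.isLt; omega⟩

/-- The substitution `x_0, x_1, x_1, x_3, x_3, …` (arguments identified in
consecutive pairs starting from the second and third). -/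
def OddPair {A : Type*} (m : ℕ) (x : Fin (m+2) → A) : Fin (m+2) → A :=
  fun j => x ⟨2 * ((j.val + 1) / 2) - 1, by have := j.isLt; omega⟩


private lemma parmul (a b l : ℕ) (h : a % 2 = b % 2) : (a*l) % 2 = (b*l) % 2 := by
  rw [Nat.mul_mod, Nat.mul_mod b, h]

private lemma succ_mul' (j l : ℕ) (hj : 1 ≤ j) : (j-1)*l + l = j*l := by
  calc (j-1)*l + l = (j-1+1)*l := (Nat.succ_mul _ _).symm
    _ = j*l := by rw [Nat.sub_add_cancel hj]

/-- Position of coordinate `j` at local time `u` in slide `i`. -/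
def JPos (m ℓ i u j : ℕ) : ℕ :=
  if j = 0 then 0
  else if j = m + 1 then m * ℓ + 1
  else if (i + j) % 2 = 0 then (j - 1) * ℓ + min u (if j = m then ℓ + 1 else ℓ)
  else if j = m then m * ℓ + 1 - u else j * ℓ - (u - 1)

lemma JPos_zero (m ℓ i u : ℕ) : JPos m ℓ i u 0 = 0 := by simp [JPos]

lemma JPos_top (m ℓ i u : ℕ) : JPos m ℓ i u (m+1) = m*ℓ+1 := by
  simp [JPos]

lemma JPos_move (m ℓ : ℕ) (hm : 1 ≤ m) (hℓ : 1 ≤ ℓ) (i u j : ℕ)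
    (hi : 1 ≤ i) (hu : u ≤ ℓ) (hj : j ≤ m+1) :
    JPos m ℓ i (u+1) j = JPos m ℓ i u j ∨
    ∃ f, f < m*ℓ+1 ∧ f % 2 = ((i-1)*ℓ + u) % 2 ∧
      ((JPos m ℓ i u j = f ∧ JPos m ℓ i (u+1) j = f+1) ∨
       (JPos m ℓ i u j = f + 1 ∧ JPos m ℓ i (u+1) j = f)) := by
  rcases eq_or_ne j 0 with rfl | hj0
  · left; rfl
  rcases eq_or_ne j (m+1) with rfl | hjtop
  · left; simp [JPos]
  have hj1 : 1 ≤ j := by omega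
  have hjm : j ≤ m := by omega
  have e1 : (j-1)*ℓ + ℓ = j*ℓ := succ_mul' j ℓ hj1
  have e2 : j*ℓ ≤ m*ℓ := Nat.mul_le_mul_right ℓ hjm
  have e3 : ℓ ≤ j*ℓ := by simpa using Nat.mul_le_mul_right ℓ hj1
  rcases Nat.eq_zero_or_pos ((i+j) % 2) with hpar | hpar
  · -- riser
    have hpp : (j-1) % 2 = (i-1) % 2 := by omega
    have epar : ((j-1)*ℓ) % 2 = ((i-1)*ℓ) % 2 := parmul _ _ _ hpp
    rcases eq_or_ne j m with rfl | hjm'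
    · -- j = m, riser : moves always
      right
      refine ⟨(j-1)*ℓ + u, by omega, by omega, Or.inl ⟨?_, ?_⟩⟩ <;>
        simp only [JPos, if_neg hj0, if_neg hjtop, if_pos hpar, if_pos rfl, eq_self_iff_true, if_true] <;> omega
    · rcases Nat.lt_or_ge u ℓ with hu' | hu'
      · right
        refine ⟨(j-1)*ℓ + u, by omega, by omega, Or.inl ⟨?_, ?_⟩⟩ <;>
          simp only [JPos, if_neg hj0, if_neg hjtop, if_pos hpar, if_neg hjm'] <;> omega
      · left
        simp only [JPos, if_neg hj0, if_neg hjtop, if_pos hpar, if_neg hjm']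
        omega
  · -- descender
    have hpar' : ¬ ((i+j) % 2 = 0) := by omega
    have hpp : j % 2 = (i-1) % 2 := by omega
    have epar : (j*ℓ) % 2 = ((i-1)*ℓ) % 2 := parmul _ _ _ hpp
    rcases eq_or_ne j m with rfl | hjm'
    · right
      refine ⟨j*ℓ - u, by omega, by omega, Or.inr ⟨?_, ?_⟩⟩ <;>
        simp only [JPos, if_neg hj0, if_neg hjtop, if_neg hpar', if_pos rfl, eq_self_iff_true, if_true] <;> omega
    · rcases Nat.eq_zero_or_pos u with rfl | hu1
      · left
        simp only [JPos, if_neg hj0, if_neg hjtop, if_neg hpar', if_neg hjm']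
      · right
        refine ⟨j*ℓ - u, by omega, by omega, Or.inr ⟨?_, ?_⟩⟩ <;>
          simp only [JPos, if_neg hj0, if_neg hjtop, if_neg hpar', if_neg hjm'] <;> omega

lemma JPos_collapse0 (m ℓ : ℕ) (hm : 1 ≤ m) (hℓ : 1 ≤ ℓ) (i j : ℕ)
    (hi : 1 ≤ i) (hj1 : 1 ≤ j) (hj : j ≤ m+1) (hp : (i+j) % 2 = 0) :
    JPos m ℓ i 0 j = JPos m ℓ i 0 (j-1) := by
  rcases eq_or_ne j (m+1) with rfl | hjtop
  · -- j = m+1, j-1 = m is a descender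
    have h0 : (m+1 : ℕ) ≠ 0 := by omega
    have hm0 : m ≠ 0 := by omega
    have hmm : m ≠ m + 1 := by omega
    have hp' : ¬ ((i + m) % 2 = 0) := by omega
    simp only [JPos, if_neg h0, if_pos rfl, Nat.add_sub_cancel, if_neg hm0, if_neg hmm,
      if_neg hp', eq_self_iff_true, if_true]
    omega
  · have hj0 : j ≠ 0 := by omega
    have hjm : j ≤ m := by omega
    have e1 : (j-1)*ℓ + ℓ = j*ℓ := succ_mul' j ℓ hj1
    -- LHS: riser at (j-1)*ℓ
    have hL : JPos m ℓ i 0 j = (j-1)*ℓ := by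
      simp only [JPos, if_neg hj0, if_neg hjtop, if_pos hp]
      omega
    rw [hL]
    rcases eq_or_ne (j-1) 0 with hj1' | hj1'
    · rw [hj1', JPos_zero]; omega
    · have hjt' : j - 1 ≠ m + 1 := by omega
      have hjm' : j - 1 ≠ m := by omega
      have hp' : ¬ ((i + (j-1)) % 2 = 0) := by omega
      have e2 : (j-1-1)*ℓ + ℓ = (j-1)*ℓ := succ_mul' (j-1) ℓ (by omega)
      simp only [JPos, if_neg hj1', if_neg hjt', if_neg hp', if_neg hjm']
      omega

lemma JPos_collapseL (m ℓ : ℕ) (hm : 1 ≤ m) (hℓ : 1 ≤ ℓ) (i j : ℕ)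
    (hi : 1 ≤ i) (hj1 : 1 ≤ j) (hj : j ≤ m+1) (hp : (i+j) % 2 = 1) :
    JPos m ℓ i (ℓ+1) j = JPos m ℓ i (ℓ+1) (j-1) := by
  have em : (m-1)*ℓ + ℓ = m*ℓ := succ_mul' m ℓ hm
  rcases eq_or_ne j (m+1) with rfl | hjtop
  · -- j = m+1 ; j-1 = m is a riser, at (m-1)*ℓ + min (ℓ+1) (ℓ+1) = m*ℓ+1
    have h0 : (m+1 : ℕ) ≠ 0 := by omega
    have hm0 : m ≠ 0 := by omega
    have hmm : m ≠ m + 1 := by omega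
    have hp' : (i + m) % 2 = 0 := by omega
    simp only [JPos, if_neg h0, if_pos rfl, Nat.add_sub_cancel, if_neg hm0, if_neg hmm,
      if_pos hp', eq_self_iff_true, if_true]
    omega
  · have hj0 : j ≠ 0 := by omega
    have hjm : j ≤ m := by omega
    have hp0 : ¬ ((i+j) % 2 = 0) := by omega
    have e1 : (j-1)*ℓ + ℓ = j*ℓ := succ_mul' j ℓ hj1
    have e3 : ℓ ≤ j*ℓ := by simpa using Nat.mul_le_mul_right ℓ hj1
    -- LHS : descender, at value (j-1)*ℓ
    have hL : JPos m ℓ i (ℓ+1) j = (j-1)*ℓ := by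
      simp only [JPos, if_neg hj0, if_neg hjtop, if_neg hp0]
      rcases eq_or_ne j m with rfl | hjm'
      · simp only [eq_self_iff_true, if_true]; omega
      · simp only [if_neg hjm']; omega
    rw [hL]
    rcases eq_or_ne (j-1) 0 with hj1' | hj1'
    · rw [hj1', JPos_zero]; omega
    · have hjt' : j - 1 ≠ m + 1 := by omega
      have hjm' : j - 1 ≠ m := by omega
      have hp' : (i + (j-1)) % 2 = 0 := by omega
      have e2 : (j-1-1)*ℓ + ℓ = (j-1)*ℓ := succ_mul' (j-1) ℓ (by omega)
      simp only [JPos, if_neg hj1', if_neg hjt', if_pos hp', if_neg hjm']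
      omega

lemma JPos_cross (m ℓ : ℕ) (hm : 1 ≤ m) (hℓ : 1 ≤ ℓ) (i j : ℕ) (hj : j ≤ m+1) :
    JPos m ℓ i (ℓ+1) j = JPos m ℓ (i+1) 0 j := by
  rcases eq_or_ne j 0 with rfl | hj0
  · simp [JPos]
  rcases eq_or_ne j (m+1) with rfl | hjtop
  · simp [JPos]
  have hj1 : 1 ≤ j := by omega
  have hjm : j ≤ m := by omega
  have e1 : (j-1)*ℓ + ℓ = j*ℓ := succ_mul' j ℓ hj1
  have e3 : ℓ ≤ j*ℓ := by simpa using Nat.mul_le_mul_right ℓ hj1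
  rcases Nat.eq_zero_or_pos ((i+j) % 2) with hp | hp
  · -- riser in slide i, descender in slide i+1
    have hp' : ¬ ((i+1+j) % 2 = 0) := by omega
    simp only [JPos, if_neg hj0, if_neg hjtop, if_pos hp, if_neg hp']
    rcases eq_or_ne j m with rfl | hjm'
    · simp only [eq_self_iff_true, if_true]; omega
    · simp only [if_neg hjm']; omega
  · have hp0 : ¬ ((i+j) % 2 = 0) := by omega
    have hp' : (i+1+j) % 2 = 0 := by omega
    simp only [JPos, if_neg hj0, if_neg hjtop, if_neg hp0, if_pos hp']
    rcases eq_or_ne j m with rfl | hjm'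
    · simp only [eq_self_iff_true, if_true]; omega
    · simp only [if_neg hjm']; omega

lemma evenPair_eq_self {A : Type*} {m : ℕ} (x : Fin (m+2) → A)
    (h : ∀ j : Fin (m+2), j.val % 2 = 1 →
      x j = x ⟨j.val - 1, Nat.lt_of_le_of_lt (Nat.sub_le _ _) j.isLt⟩) :
    EvenPair m x = x := by
  funext j
  have hlt := j.isLt
  rcases Nat.eq_zero_or_pos (j.val % 2) with hp | hp
  · have : 2 * (j.val / 2) = j.val := by omega
    simp only [EvenPair]
    congr 1
    exact Fin.ext (by simpa using this)
  · have h1 : j.val % 2 = 1 := by omega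
    have h2 : 2 * (j.val / 2) = j.val - 1 := by omega
    simp only [EvenPair]
    rw [h j h1]
    congr 1
    exact Fin.ext (by simpa using h2)

lemma oddPair_eq_self {A : Type*} {m : ℕ} (x : Fin (m+2) → A)
    (h : ∀ j : Fin (m+2), j.val % 2 = 0 → 1 ≤ j.val →
      x j = x ⟨j.val - 1, Nat.lt_of_le_of_lt (Nat.sub_le _ _) j.isLt⟩) :
    OddPair m x = x := by
  funext j
  have hlt := j.isLt
  rcases Nat.eq_zero_or_pos (j.val % 2) with hp | hp
  · rcases Nat.eq_zero_or_pos j.val with h0 | h0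
    · have : 2 * ((j.val + 1) / 2) - 1 = j.val := by omega
      simp only [OddPair]
      congr 1
      exact Fin.ext (by simpa using this)
    · have h2 : 2 * ((j.val + 1) / 2) - 1 = j.val - 1 := by omega
      simp only [OddPair]
      rw [h j hp h0]
      congr 1
      exact Fin.ext (by simpa using h2)
  · have : 2 * ((j.val + 1) / 2) - 1 = j.val := by omega
    simp only [OddPair]
    congr 1
    exact Fin.ext (by simpa using this)

lemma altComp_of_chain {A : Type*} :
    ∀ (N : ℕ) (R S : A → A → Prop) (e : ℕ → A),
      (∀ n, n < N → (if n % 2 = 0 then R else S) (e n) (e (n+1))) →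
      AltComp R S N (e 0) (e N)
  | 0, _, _, _, _ => rfl
  | 1, R, S, e, h => by have h0 := h 0 (by omega); simp at h0; exact h0
  | (N+2), R, S, e, h => by
    refine ⟨e 1, by simpa using h 0 (by omega), ?_⟩
    exact altComp_of_chain (N+1) S R (fun n => e (n+1)) (by
      intro n hn
      have h' := h (n+1) (by omega)
      rcases Nat.eq_zero_or_pos (n % 2) with hp | hp
      · have h2 : (n+1) % 2 = 1 := by omega
        rw [h2] at h'
        rw [hp]
        simpa using h'
      · have h1 : n % 2 = 1 := by omega
        have h2 : (n+1) % 2 = 0 := by omega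
        rw [h2] at h'
        rw [h1]
        simpa using h')

lemma chain_of_altComp {A : Type*} :
    ∀ (N : ℕ) (R S : A → A → Prop) (a c : A),
      AltComp R S N a c →
      ∃ e : ℕ → A, e 0 = a ∧ e N = c ∧
        ∀ n, n < N → (if n % 2 = 0 then R else S) (e n) (e (n+1))
  | 0, _, _, a, c, h => by
    have h' : a = c := h
    exact ⟨fun _ => a, rfl, h' ▸ rfl, fun n hn => absurd hn (by omega)⟩
  | 1, R, S, a, c, h => by
    refine ⟨fun n => if n = 0 then a else c, by simp, by simp, ?_⟩
    intro n hn
    have : n = 0 := by omega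
    subst this
    simp; exact h
  | (N+2), R, S, a, c, h => by
    obtain ⟨b, hab, hbc⟩ := h
    obtain ⟨e', h0, hN, hs⟩ := chain_of_altComp (N+1) S R b c hbc
    refine ⟨fun n => match n with | 0 => a | (n+1) => e' n, rfl, hN, ?_⟩
    intro n hn
    match n with
    | 0 => simpa [h0] using hab
    | (n+1) =>
      have h' := hs n (by omega)
      rcases Nat.eq_zero_or_pos (n % 2) with hp | hp
      · have h2 : (n+1) % 2 = 1 := by omega
        rw [hp] at h'
        rw [h2]
        simpa using h'
      · have h1 : n % 2 = 1 := by omega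
        have h2 : (n+1) % 2 = 0 := by omega
        rw [h1] at h'
        rw [h2]
        simpa using h'

def Tfun {A B : Type*} {K : ℕ} (t : Fin (K+1) → B → A) (i : ℕ) (x : B) : A :=
  if h : i ≤ K then t ⟨i, Nat.lt_succ_of_le h⟩ x else t (Fin.last K) x

lemma Tfun_eq {A B : Type*} {K : ℕ} (t : Fin (K+1) → B → A) (i : ℕ) (h : i ≤ K) (x : B) :
    Tfun t i x = t ⟨i, Nat.lt_succ_of_le h⟩ x := dif_pos h

def JCfg {A : Type*} (m ℓ : ℕ) (cc : ℕ → A) (i u : ℕ) : Fin (m+2) → A :=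
  fun j => cc (JPos m ℓ i u j.val)

theorem stmt2 {A : Type*} (m k ℓ : ℕ) (hm : 1 ≤ m) (hk : 1 ≤ k) (hℓ : 1 ≤ ℓ)
    (t : Fin (k+2) → (Fin (m+2) → A) → A)
    (hB1 : ∀ x : Fin (m+2) → A, t 0 x = x 0)
    (hB2 : ∀ (i : Fin (k+2)) (x : Fin (m+2) → A), x (Fin.last (m+1)) = x 0 → t i x = x 0)
    (hB3even : ∀ (i : ℕ) (hi : i ≤ k), i % 2 = 0 →
      ∀ x : Fin (m+2) → A, t ⟨i, by omega⟩ (EvenPair m x) = t ⟨i+1, by omega⟩ (EvenPair m x))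
    (hB3odd : ∀ (i : ℕ) (hi : i ≤ k), i % 2 = 1 →
      ∀ x : Fin (m+2) → A, t ⟨i, by omega⟩ (OddPair m x) = t ⟨i+1, by omega⟩ (OddPair m x))
    (hB4 : ∀ x : Fin (m+2) → A, t (Fin.last (k+1)) x = x (Fin.last (m+1)))
    (α β γ : A → A → Prop)
    (hα : Equivalence α) (hαcompat : ∀ i, CompatV (t i) α)
    (hβ : Equivalence β) (hβcompat : ∀ i, CompatV (t i) β)
    (hγ : Equivalence γ) (hγcompat : ∀ i, CompatV (t i) γ) :
    ∀ a c, InterRel α (AltComp β γ (m * ℓ + 1)) a c →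
      AltComp (InterRel α β) (InterRel α γ) (k * ℓ + 1) a c := by
  intro a c hic
  obtain ⟨hac, hchain⟩ := hic
  obtain ⟨cc, hcc0, hccN, hccs⟩ := chain_of_altComp (m*ℓ+1) β γ a c hchain
  subst hcc0; subst hccN
  -- basic Tfun facts
  have hcompat : ∀ (R : A → A → Prop), (∀ idx, CompatV (t idx) R) →
      ∀ (i : ℕ) (x y : Fin (m+2) → A), (∀ j, R (x j) (y j)) →
        R (Tfun t i x) (Tfun t i y) := by
    intro R hR i x y hxy
    unfold Tfun
    by_cases h : i ≤ k + 1
    · rw [dif_pos h, dif_pos h]; exact hR _ _ _ hxy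
    · rw [dif_neg h, dif_neg h]; exact hR _ _ _ hxy
  have hB2' : ∀ (i : ℕ) (x : Fin (m+2) → A), x (Fin.last (m+1)) = x 0 →
      Tfun t i x = x 0 := by
    intro i x hx
    unfold Tfun
    by_cases h : i ≤ k + 1
    · rw [dif_pos h]; exact hB2 _ _ hx
    · rw [dif_neg h]; exact hB2 _ _ hx
  have hB4' : ∀ x : Fin (m+2) → A, Tfun t (k+1) x = x (Fin.last (m+1)) := by
    intro x
    rw [Tfun_eq t (k+1) le_rfl]
    exact hB4 x
  have hB1' : ∀ x : Fin (m+2) → A, Tfun t 0 x = x 0 := by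
    intro x
    rw [Tfun_eq t 0 (by omega)]
    have h0 : (⟨0, Nat.lt_succ_of_le (by omega)⟩ : Fin (k+2)) = 0 := rfl
    rw [h0]
    exact hB1 x
  -- cfg facts
  have hcfg0 : ∀ i u, JCfg m ℓ cc i u 0 = cc 0 := by
    intro i u
    show cc (JPos m ℓ i u (0 : Fin (m+2)).val) = cc 0
    rw [Fin.val_zero, JPos_zero]
  have hcfgL : ∀ i u, JCfg m ℓ cc i u (Fin.last (m+1)) = cc (m*ℓ+1) := by
    intro i u
    show cc (JPos m ℓ i u (Fin.last (m+1)).val) = cc (m*ℓ+1)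
    rw [Fin.val_last, JPos_top]
  -- all chain elements are α-related to cc 0
  have hα0 : ∀ i' i u, α (Tfun t i' (JCfg m ℓ cc i u)) (cc 0) := by
    intro i' i u
    have h0ne : (0 : Fin (m+2)) ≠ Fin.last (m+1) := by
      simp [Fin.ext_iff]
    have hupd : α (Tfun t i' (JCfg m ℓ cc i u))
        (Tfun t i' (Function.update (JCfg m ℓ cc i u) (Fin.last (m+1)) (cc 0))) := by
      apply hcompat α hαcompat
      intro j
      rcases eq_or_ne j (Fin.last (m+1)) with rfl | hne
      · rw [Function.update_self, hcfgL]
        exact hα.symm hac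
      · rw [Function.update_of_ne hne]
        exact hα.refl _
    have h2 : Tfun t i' (Function.update (JCfg m ℓ cc i u) (Fin.last (m+1)) (cc 0)) = cc 0 := by
      have h0 : Function.update (JCfg m ℓ cc i u) (Fin.last (m+1)) (cc 0) 0
          = cc 0 := by
        rw [Function.update_of_ne h0ne, hcfg0]
      rw [hB2' _ _ (by rw [Function.update_self, h0]), h0]
    rw [h2] at hupd
    exact hupd
  -- the elementary move
  have hmoveC : ∀ i u, 1 ≤ i → u ≤ ℓ → ∀ i',
      (if ((i-1)*ℓ + u) % 2 = 0 then β else γ)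
        (Tfun t i' (JCfg m ℓ cc i u)) (Tfun t i' (JCfg m ℓ cc i (u+1))) := by
    intro i u hi hu i'
    have hcomp : ∀ j : Fin (m+2), (if ((i-1)*ℓ + u) % 2 = 0 then β else γ)
        (JCfg m ℓ cc i u j) (JCfg m ℓ cc i (u+1) j) := by
      intro j
      have hj := j.isLt
      show (if ((i-1)*ℓ + u) % 2 = 0 then β else γ)
        (cc (JPos m ℓ i u j.val)) (cc (JPos m ℓ i (u+1) j.val))
      rcases JPos_move m ℓ hm hℓ i u j.val hi hu (by omega) with heq | ⟨f, hf1, hf2, hcase⟩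
      · rw [heq]
        by_cases hp : ((i-1)*ℓ + u) % 2 = 0
        · rw [if_pos hp]; exact hβ.refl _
        · rw [if_neg hp]; exact hγ.refl _
      · have hrel := hccs f (by omega)
        rcases hcase with ⟨hA, hB⟩ | ⟨hA, hB⟩
        · rw [hA, hB, ← hf2]
          exact hrel
        · rw [hA, hB, ← hf2]
          by_cases hp : f % 2 = 0
          · rw [if_pos hp] at hrel ⊢; exact hβ.symm hrel
          · rw [if_neg hp] at hrel ⊢; exact hγ.symm hrel
    by_cases hp : ((i-1)*ℓ + u) % 2 = 0
    · rw [if_pos hp]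
      simp only [if_pos hp] at hcomp
      exact hcompat β hβcompat i' _ _ hcomp
    · rw [if_neg hp]
      simp only [if_neg hp] at hcomp
      exact hcompat γ hγcompat i' _ _ hcomp
  -- the B3 transitions
  have htrans : ∀ i, 1 ≤ i → i ≤ k →
      Tfun t i (JCfg m ℓ cc i (ℓ+1)) = Tfun t (i+1) (JCfg m ℓ cc i (ℓ+1)) := by
    intro i hi1 hik
    rcases Nat.eq_zero_or_pos (i % 2) with hp | hp
    · have hxE : EvenPair m (JCfg m ℓ cc i (ℓ+1)) = JCfg m ℓ cc i (ℓ+1) := by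
        apply evenPair_eq_self
        intro j hj
        show cc (JPos m ℓ i (ℓ+1) j.val) = cc (JPos m ℓ i (ℓ+1) (j.val - 1))
        rw [JPos_collapseL m ℓ hm hℓ i j.val hi1 (by omega) (by have := j.isLt; omega)
          (by omega)]
      have h3 := hB3even i hik hp (JCfg m ℓ cc i (ℓ+1))
      rw [hxE] at h3
      rw [Tfun_eq t i (by omega), Tfun_eq t (i+1) (by omega)]
      exact h3
    · have hp1 : i % 2 = 1 := by omega
      have hxE : OddPair m (JCfg m ℓ cc i (ℓ+1)) = JCfg m ℓ cc i (ℓ+1) := by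
        apply oddPair_eq_self
        intro j hj hj1
        show cc (JPos m ℓ i (ℓ+1) j.val) = cc (JPos m ℓ i (ℓ+1) (j.val - 1))
        rw [JPos_collapseL m ℓ hm hℓ i j.val hi1 (by omega) (by have := j.isLt; omega)
          (by omega)]
      have h3 := hB3odd i hik hp1 (JCfg m ℓ cc i (ℓ+1))
      rw [hxE] at h3
      rw [Tfun_eq t i (by omega), Tfun_eq t (i+1) (by omega)]
      exact h3
  have htrans0 : Tfun t 0 (JCfg m ℓ cc 1 0) = Tfun t 1 (JCfg m ℓ cc 1 0) := by
    have hxE : EvenPair m (JCfg m ℓ cc 1 0) = JCfg m ℓ cc 1 0 := by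
      apply evenPair_eq_self
      intro j hj
      show cc (JPos m ℓ 1 0 j.val) = cc (JPos m ℓ 1 0 (j.val - 1))
      rw [JPos_collapse0 m ℓ hm hℓ 1 j.val le_rfl (by omega) (by have := j.isLt; omega)
        (by omega)]
    have h3 := hB3even 0 (by omega) rfl (JCfg m ℓ cc 1 0)
    rw [hxE] at h3
    rw [Tfun_eq t 0 (by omega), Tfun_eq t 1 (by omega)]
    exact h3
  have hstart : cc 0 = Tfun t 1 (JCfg m ℓ cc 1 0) := by
    rw [← htrans0, hB1', hcfg0]
  -- the new chain
  set e : ℕ → A := fun n => if n = 0 then cc 0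
    else Tfun t ((n-1)/ℓ + 1) (JCfg m ℓ cc ((n-1)/ℓ + 1) (n - ((n-1)/ℓ)*ℓ)) with he
  have he0 : e 0 = cc 0 := by simp [he]
  have heval : ∀ q r, 1 ≤ r → r ≤ ℓ → e (q*ℓ + r) = Tfun t (q+1) (JCfg m ℓ cc (q+1) r) := by
    intro q r h1 h2
    have hne : ¬ (q*ℓ + r = 0) := by omega
    have hdiv : (q*ℓ + r - 1)/ℓ = q := by
      have hstep : q*ℓ + r - 1 = ℓ*q + (r-1) := by
        have hc : q*ℓ = ℓ*q := Nat.mul_comm _ _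
        omega
      rw [hstep, Nat.mul_add_div (by omega), Nat.div_eq_of_lt (by omega)]
      omega
    have hu : q*ℓ + r - q*ℓ = r := by omega
    simp only [he]
    rw [if_neg hne, hdiv, hu]
  have hend : e (k*ℓ+1) = cc (m*ℓ+1) := by
    rw [heval k 1 le_rfl hℓ, hB4', hcfgL]
  have hdecomp : ∀ n, 1 ≤ n → ∃ q r, n = q*ℓ + r ∧ 1 ≤ r ∧ r ≤ ℓ := by
    intro n hn
    refine ⟨(n-1)/ℓ, (n-1) % ℓ + 1, ?_, by omega, ?_⟩
    · have hdm := Nat.div_add_mod (n-1) ℓ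
      have hc : ((n-1)/ℓ) * ℓ = ℓ * ((n-1)/ℓ) := Nat.mul_comm _ _
      omega
    · have h2 : (n-1) % ℓ < ℓ := Nat.mod_lt _ (by omega)
      omega
  have hαe : ∀ n, α (e n) (cc 0) := by
    intro n
    rcases Nat.eq_zero_or_pos n with rfl | hn
    · rw [he0]; exact hα.refl _
    · simp only [he]
      rw [if_neg (by omega)]
      exact hα0 _ _ _
  -- the relational steps
  have hRel : ∀ n, n < k*ℓ+1 → (if n % 2 = 0 then β else γ) (e n) (e (n+1)) := by
    intro n hn
    rcases Nat.eq_zero_or_pos n with rfl | hn1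
    · rw [if_pos (by norm_num)]
      have h1 : e (0+1) = Tfun t 1 (JCfg m ℓ cc 1 1) := by
        have h := heval 0 1 le_rfl hℓ
        simpa using h
      rw [he0, h1, hstart]
      have h := hmoveC 1 0 le_rfl (by omega) 1
      simpa using h
    · obtain ⟨q, r, hqr, hr1, hr2⟩ := hdecomp n hn1
      have hen : e n = Tfun t (q+1) (JCfg m ℓ cc (q+1) r) := by
        rw [hqr]; exact heval q r hr1 hr2
      have hq1 : (q+1) - 1 = q := by omega
      rcases Nat.lt_or_ge r ℓ with hrl | hrl
      · -- interior step
        have hen1 : e (n+1) = Tfun t (q+1) (JCfg m ℓ cc (q+1) (r+1)) := by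
          have hx : n + 1 = q*ℓ + (r+1) := by omega
          rw [hx]; exact heval q (r+1) (by omega) (by omega)
        rw [hen, hen1]
        have h := hmoveC (q+1) r (by omega) (by omega) (q+1)
        rw [hq1, ← hqr] at h
        exact h
      · -- boundary step
        have hrl' : r = ℓ := by omega
        subst r
        have hmul : (q+1) * ℓ = q * ℓ + ℓ := Nat.succ_mul q ℓ
        have hqk : q + 1 ≤ k := by
          by_contra hcon
          push_neg at hcon
          have h1 : k*ℓ ≤ q*ℓ := Nat.mul_le_mul_right ℓ (by omega)
          omega
        have hen1 : e (n+1) = Tfun t (q+1+1) (JCfg m ℓ cc (q+1+1) 1) := by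
          have hx : n + 1 = (q+1)*ℓ + 1 := by omega
          rw [hx]; exact heval (q+1) 1 le_rfl hℓ
        have hstep1 := hmoveC (q+1) ℓ (by omega) le_rfl (q+1)
        have heq1 := htrans (q+1) (by omega) hqk
        have heqc : JCfg m ℓ cc (q+1) (ℓ+1) = JCfg m ℓ cc (q+1+1) 0 := by
          funext j
          show cc (JPos m ℓ (q+1) (ℓ+1) j.val) = cc (JPos m ℓ (q+1+1) 0 j.val)
          rw [JPos_cross m ℓ hm hℓ (q+1) j.val (by have := j.isLt; omega)]
        have hstep2 := hmoveC (q+1+1) 0 (by omega) (by omega) (q+1+1)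
        rw [hq1, ← hqr] at hstep1
        have hq2 : (q+1+1) - 1 = q + 1 := by omega
        rw [hq2] at hstep2
        have hnn : (q+1) * ℓ + 0 = n := by omega
        rw [hnn] at hstep2
        -- hstep1 : R (T (q+1) (cfg (q+1) ℓ)) (T (q+1) (cfg (q+1) (ℓ+1)))
        -- heq1/heqc : T (q+1) (cfg (q+1) (ℓ+1)) = T (q+2) (cfg (q+2) 0)
        -- hstep2 : R (T (q+2) (cfg (q+2) 0)) (T (q+2) (cfg (q+2) 1))
        rw [hen, hen1]
        rw [heq1, heqc] at hstep1
        by_cases hp : n % 2 = 0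
        · rw [if_pos hp] at hstep1 hstep2 ⊢
          exact hβ.trans hstep1 hstep2
        · rw [if_neg hp] at hstep1 hstep2 ⊢
          exact hγ.trans hstep1 hstep2
  -- assemble
  have hfinal := altComp_of_chain (k*ℓ+1) (InterRel α β) (InterRel α γ) e (by
    intro n hn
    have hr := hRel n hn
    by_cases hp : n % 2 = 0
    · rw [if_pos hp] at hr ⊢
      exact ⟨hα.trans (hαe n) (hα.symm (hαe (n+1))), hr⟩
    · rw [if_neg hp] at hr ⊢
      exact ⟨hα.trans (hαe n) (hα.symm (hαe (n+1))), hr⟩)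
  rw [he0, hend] at hfinal
  exact hfinal
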